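/- Let 𝔤 = 𝔤_{4.7} be the 4-dimensional real Lie algebra with basis e₁,...,e₄ and nonzero brackets [e₁,e₄] = 2e₁, [e₂,e₄] = e₂, [e₃,e₄] = e₂ + e₃, [e₂,e₃] = e₁. A 4×4 real matrix R equals η·Id + D for some η ∈ ℝ and some derivation D of 𝔤 if and only if R₂₁ = R₃₁ = R₄₁ = 0, R₃₂ = R₄₂ = R₄₃ = 0, R₃₄ = −R₁₂, R₂₄ = R₁₃ − R₁₂, R₃₃ = R₂₂, and R₄₄ = R₂₂ + R₃₃ − R₁₁. In this case η = R₄₄. -/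
import Mathlib
open Matrix

def br (x y : Fin 4 → ℝ) : Fin 4 → ℝ :=
  ![2 * (x 0 * y 3 - x 3 * y 0) + (x 1 * y 2 - x 2 * y 1), (x 1 * y 3 - x 3 * y 1) + (x 2 * y 3 - x 3 * y 2), (x 2 * y 3 - x 3 * y 2), (0:ℝ)]

def IsDer (D : Matrix (Fin 4) (Fin 4) ℝ) : Prop :=
  ∀ x y : Fin 4 → ℝ, D.mulVec (br x y) = br (D.mulVec x) y + br x (D.mulVec y)

lemma isDer_iff (D : Matrix (Fin 4) (Fin 4) ℝ) :
    IsDer D ↔ (D 1 0 = 0 ∧ D 2 0 = 0 ∧ D 3 0 = 0 ∧ D 2 1 = 0 ∧ D 3 1 = 0 ∧ D 3 2 = 0 ∧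
      D 3 3 = 0 ∧ D 2 3 = -D 0 1 ∧ D 1 3 = D 0 2 - D 0 1 ∧ D 2 2 = D 1 1 ∧ D 0 0 = 2 * D 1 1) := by
  constructor
  · intro h
    have h03_0 := congrFun (h ![1,0,0,0] ![0,0,0,1]) 0
    have h03_1 := congrFun (h ![1,0,0,0] ![0,0,0,1]) 1
    have h03_2 := congrFun (h ![1,0,0,0] ![0,0,0,1]) 2
    have h03_3 := congrFun (h ![1,0,0,0] ![0,0,0,1]) 3
    have h13_0 := congrFun (h ![0,1,0,0] ![0,0,0,1]) 0
    have h13_1 := congrFun (h ![0,1,0,0] ![0,0,0,1]) 1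
    have h13_3 := congrFun (h ![0,1,0,0] ![0,0,0,1]) 3
    have h23_0 := congrFun (h ![0,0,1,0] ![0,0,0,1]) 0
    have h23_1 := congrFun (h ![0,0,1,0] ![0,0,0,1]) 1
    have h23_3 := congrFun (h ![0,0,1,0] ![0,0,0,1]) 3
    have h12_0 := congrFun (h ![0,1,0,0] ![0,0,1,0]) 0
    simp [br, mulVec, dotProduct, Fin.sum_univ_four] at h03_0 h03_1 h03_2 h03_3 h13_0 h13_1 h13_3 h23_0 h23_1 h23_3 h12_0
    refine ⟨?_, ?_, ?_, ?_, ?_, ?_, ?_, ?_, ?_, ?_, ?_⟩ <;> linarith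
  · rintro ⟨h1, h2, h3, h4, h5, h6, h7, h8, h9, h10, h11⟩ x y
    funext i
    fin_cases i <;>
      simp [br, mulVec, dotProduct, Fin.sum_univ_four, h1, h2, h3, h4, h5, h6, h7, h8, h9, h10, h11] <;>
      ring

theorem stmt_17 (R : Matrix (Fin 4) (Fin 4) ℝ) :
    ((∃ (η : ℝ) (D : Matrix (Fin 4) (Fin 4) ℝ), IsDer D ∧
        R = η • (1 : Matrix (Fin 4) (Fin 4) ℝ) + D) ↔
      (R 1 0 = 0 ∧ R 2 0 = 0 ∧ R 3 0 = 0 ∧ R 2 1 = 0 ∧ R 3 1 = 0 ∧ R 3 2 = 0 ∧ R 2 3 = -R 0 1 ∧ R 1 3 = R 0 2 - R 0 1 ∧ R 2 2 = R 1 1 ∧ R 3 3 = R 1 1 + R 2 2 - R 0 0)) ∧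
    (∀ (η : ℝ) (D : Matrix (Fin 4) (Fin 4) ℝ), IsDer D →
      R = η • (1 : Matrix (Fin 4) (Fin 4) ℝ) + D → η = R 3 3) := by
  constructor
  · constructor
    · rintro ⟨η, D, hD, rfl⟩
      rw [isDer_iff] at hD
      obtain ⟨h1, h2, h3, h4, h5, h6, h7, h8, h9, h10, h11⟩ := hD
      simp [Matrix.add_apply, Matrix.smul_apply, Matrix.one_apply]
      refine ⟨h1, h2, h3, h4, h5, h6, ?_, ?_, ?_, ?_⟩ <;> linarith
    · rintro ⟨h1, h2, h3, h4, h5, h6, h7, h8, h9, h10⟩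
      refine ⟨R 3 3, R - R 3 3 • 1, ?_, by abel⟩
      rw [isDer_iff]
      simp [Matrix.sub_apply, Matrix.smul_apply, Matrix.one_apply]
      refine ⟨h1, h2, h3, h4, h5, h6, ?_, ?_, ?_, ?_⟩ <;> linarith
  · rintro η D hD rfl
    rw [isDer_iff] at hD
    simp [Matrix.add_apply, Matrix.smul_apply, Matrix.one_apply]
    linarith [hD.2.2.2.2.2.2.1]
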